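/- Let p ≥ 2 be an even integer, κ < 0, α := −κ > 0, λ ∈ ℝ with λ ≠ 0, and ε > 0. Suppose y : [0,∞) → ℝ is differentiable and satisfies the scalar modal ODE ẏ(t) = κ·y(t) + λ·y(t)^{p+1} for all t ≥ 0, with ε < |y(0)|, and additionally |y(0)| < (α/λ)^{1/p} in the case λ > 0. Assume also ε^{−p} − λ/α > 0. Then the hitting time T := (1/(p·α))·ln( (ε^{−p} − λ/α) / (|y(0)|^{−p} − λ/α) ) satisfies T > 0, |y(T)| = ε, and |y(t)| > ε for all t ∈ [0, T). -/

import Mathlib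

open Real Set Filter Topology

/-- Hitting time for an even-p mode (λ ≠ 0). -/
theorem stmt_12 (p : ℕ) (hp : 2 ≤ p) (hpe : Even p)
    (κ : ℝ) (hκ : κ < 0) (α : ℝ) (hα : α = -κ)
    (lam : ℝ) (hlam : lam ≠ 0) (ε : ℝ) (hε : 0 < ε)
    (y : ℝ → ℝ)
    (hy : ∀ t : ℝ, 0 ≤ t → HasDerivAt y (κ * y t + lam * y t ^ (p + 1)) t)
    (hy0 : ε < |y 0|)
    (hroa : 0 < lam → |y 0| < (α / lam) ^ ((1 : ℝ) / (p : ℝ)))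
    (harg : 0 < ε ^ (-(p : ℤ)) - lam / α)
    (T : ℝ)
    (hT : T = (1 / ((p : ℝ) * α)) *
      Real.log ((ε ^ (-(p : ℤ)) - lam / α) / (|y 0| ^ (-(p : ℤ)) - lam / α))) :
    0 < T ∧ |y T| = ε ∧ ∀ t ∈ Set.Ico (0 : ℝ) T, ε < |y t| := by
  have hα0 : 0 < α := by rw [hα]; linarith
  have hκ' : κ = -α := by rw [hα]; ring
  have hpne : p ≠ 0 := by omega
  have hp0 : (0:ℝ) < (p:ℝ) := by exact_mod_cast Nat.pos_of_ne_zero hpne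
  have hy0pos : 0 < |y 0| := lt_trans hε hy0
  have hy0ne : y 0 ≠ 0 := by
    intro h; rw [h, abs_zero] at hy0pos; exact lt_irrefl 0 hy0pos
  -- even power of abs
  have habs : ∀ x : ℝ, |x| ^ (-(p:ℤ)) = x ^ (-(p:ℤ)) := by
    intro x
    rw [zpow_neg, zpow_neg, zpow_natCast, zpow_natCast, hpe.pow_abs]
  set c : ℝ := y 0 ^ (-(p:ℤ)) - lam / α with hc_def
  -- derivative of t ↦ y t ^ (-p)
  have hderiv_u : ∀ t : ℝ, 0 ≤ t → y t ≠ 0 →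
      HasDerivAt (fun s => y s ^ (-(p:ℤ)))
        ((p:ℝ) * α * (y t ^ (-(p:ℤ))) - (p:ℝ) * lam) t := by
    intro t ht hne
    have h := (hasDerivAt_zpow (-(p:ℤ)) (y t) (Or.inl hne)).comp t (hy t ht)
    refine h.congr_deriv ?_
    symm
    have e1 : y t ^ (-(p:ℤ) - 1) * y t = y t ^ (-(p:ℤ)) := by
      rw [← zpow_add_one₀ hne]
      congr 1
      ring
    have e2 : y t ^ (-(p:ℤ) - 1) * y t ^ (p + 1) = 1 := by
      rw [← zpow_natCast (y t) (p + 1), ← zpow_add₀ hne]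
      have : (-(p:ℤ) - 1 + ((p:ℕ) + 1 : ℕ)) = 0 := by push_cast; ring
      rw [this, zpow_zero]
    rw [hκ']
    push_cast
    calc (p:ℝ) * α * y t ^ (-(p:ℤ)) - (p:ℝ) * lam
        = (p:ℝ) * α * (y t ^ (-(p:ℤ) - 1) * y t)
          - (p:ℝ) * lam * (y t ^ (-(p:ℤ) - 1) * y t ^ (p + 1)) := by rw [e1, e2]; ring
      _ = -(p:ℝ) * y t ^ (-(p:ℤ) - 1) * (-α * y t + lam * y t ^ (p + 1)) := by ring
  -- key: explicit formula while y ≠ 0 on [0,s]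
  have key : ∀ s : ℝ, 0 ≤ s → (∀ u ∈ Icc (0:ℝ) s, y u ≠ 0) →
      y s ^ (-(p:ℤ)) = lam / α + c * Real.exp ((p:ℝ) * α * s) := by
    intro s hs hne
    set g : ℝ → ℝ := fun t => (y t ^ (-(p:ℤ)) - lam / α) * Real.exp (-((p:ℝ) * α) * t)
      with hg_def
    have hg : ∀ x ∈ Icc (0:ℝ) s, HasDerivAt g 0 x := by
      intro x hx
      have h1 := hderiv_u x hx.1 (hne x hx)
      have h2 : HasDerivAt (fun t : ℝ => Real.exp (-((p:ℝ) * α) * t))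
          (Real.exp (-((p:ℝ) * α) * x) * (-((p:ℝ) * α) * 1)) x :=
        ((hasDerivAt_id x).const_mul (-((p:ℝ) * α))).exp
      have h3 := (h1.sub_const (lam / α)).mul h2
      refine h3.congr_deriv ?_
      have hαne : α ≠ 0 := ne_of_gt hα0
      field_simp
      ring
    have hgc : ContinuousOn g (Icc 0 s) := fun x hx => ((hg x hx).continuousAt).continuousWithinAt
    have hconst := constant_of_has_deriv_right_zero hgc
      (fun x hx => (hg x (Ico_subset_Icc_self hx)).hasDerivWithinAt) s (right_mem_Icc.2 hs)
    -- hconst : g s = g 0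
    have hgs : (y s ^ (-(p:ℤ)) - lam / α) * Real.exp (-((p:ℝ) * α) * s) = c := by
      have : g 0 = c := by simp [hg_def, hc_def]
      rw [← this, ← hconst]
    have hexp : Real.exp (-((p:ℝ) * α) * s) * Real.exp ((p:ℝ) * α * s) = 1 := by
      rw [← Real.exp_add]; norm_num
    have hadd : (-((p:ℝ) * α)) * s + (p:ℝ) * α * s = 0 := by ring
    have hfin : c * Real.exp ((p:ℝ) * α * s) = y s ^ (-(p:ℤ)) - lam / α := by
      rw [← hgs, mul_assoc, ← Real.exp_add, hadd, Real.exp_zero, mul_one]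
    linarith
  -- nonvanishing of y on [0,∞)
  have hnz : ∀ t : ℝ, 0 ≤ t → y t ≠ 0 := by
    by_contra h
    push_neg at h
    obtain ⟨t1, ht1, hyt1⟩ := h
    set Z : Set ℝ := {t : ℝ | 0 ≤ t ∧ y t = 0} with hZ_def
    have hZne : Z.Nonempty := ⟨t1, ht1, hyt1⟩
    have hZbd : BddBelow Z := ⟨0, fun z hz => hz.1⟩
    have hZclosed : IsClosed Z := by
      have hZeq : Z = Ici (0:ℝ) ∩ y ⁻¹' {0} := by
        ext t; simp [hZ_def, mem_Ici]
      rw [hZeq]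
      exact ContinuousOn.preimage_isClosed_of_isClosed
        (fun t ht => (hy t ht).continuousAt.continuousWithinAt) isClosed_Ici
        isClosed_singleton
    set t0 := sInf Z with ht0_def
    have ht0Z : t0 ∈ Z := hZclosed.csInf_mem hZne hZbd
    have ht0pos : 0 < t0 := by
      rcases lt_or_eq_of_le ht0Z.1 with h | h
      · exact h
      · exact absurd (h ▸ ht0Z.2) hy0ne
    have hbefore : ∀ u ∈ Ico (0:ℝ) t0, y u ≠ 0 := by
      intro u hu hyu
      exact absurd (csInf_le hZbd ⟨hu.1, hyu⟩) (not_le.2 hu.2)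
    set F : ℝ → ℝ := fun t => (lam / α + c * Real.exp ((p:ℝ) * α * t)) * y t ^ p with hF_def
    have hF1 : ∀ t ∈ Ico (0:ℝ) t0, F t = 1 := by
      intro t ht
      have hform := key t ht.1 (fun u hu => hbefore u ⟨hu.1, lt_of_le_of_lt hu.2 ht.2⟩)
      have hyt : y t ≠ 0 := hbefore t ht
      simp only [hF_def, ← hform]
      rw [zpow_neg, zpow_natCast]
      exact inv_mul_cancel₀ (pow_ne_zero p hyt)
    have hF0 : F t0 = 0 := by
      simp [hF_def, ht0Z.2, zero_pow hpne]
    have hFc : ContinuousAt F t0 := by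
      have hyc : ContinuousAt y t0 := (hy t0 ht0Z.1).continuousAt
      have h1 : ContinuousAt (fun t : ℝ => lam / α + c * Real.exp ((p:ℝ) * α * t)) t0 := by
        fun_prop
      exact h1.mul (hyc.pow p)
    have hneB : (𝓝[<] t0).NeBot := inferInstance
    have h2 : Tendsto F (𝓝[<] t0) (𝓝 (F t0)) :=
      hFc.continuousWithinAt.tendsto
    have h3 : F =ᶠ[𝓝[<] t0] fun _ => (1:ℝ) := by
      filter_upwards [Ioo_mem_nhdsLT_of_mem (⟨ht0pos, le_refl t0⟩ : t0 ∈ Ioc 0 t0)] with t ht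
      exact hF1 t ⟨le_of_lt ht.1, ht.2⟩
    have hF01 : F t0 = 1 :=
      tendsto_nhds_unique (h2.congr' h3) tendsto_const_nhds
    rw [hF0] at hF01
    norm_num at hF01
  -- global formula
  have hformula : ∀ t : ℝ, 0 ≤ t →
      y t ^ (-(p:ℤ)) = lam / α + c * Real.exp ((p:ℝ) * α * t) :=
    fun t ht => key t ht (fun u hu => hnz u hu.1)
  -- positivity facts
  have hu0 : y 0 ^ (-(p:ℤ)) = (|y 0| ^ p)⁻¹ := by
    rw [← habs, zpow_neg, zpow_natCast]
  have hu0pos : 0 < y 0 ^ (-(p:ℤ)) := by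
    rw [hu0]; positivity
  have hc : 0 < c := by
    rcases lt_or_gt_of_ne hlam with hl | hl
    · have : lam / α < 0 := div_neg_of_neg_of_pos hl hα0
      rw [hc_def]; linarith
    · have hr := hroa hl
      have hbase : (0:ℝ) < α / lam := div_pos hα0 hl
      have hpowlt : |y 0| ^ p < α / lam := by
        have h1 : |y 0| ^ p < ((α / lam) ^ ((1:ℝ) / (p:ℝ))) ^ p :=
          pow_lt_pow_left₀ hr (abs_nonneg _) hpne
        calc |y 0| ^ p < ((α / lam) ^ ((1:ℝ) / (p:ℝ))) ^ p := h1
          _ = α / lam := by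
            rw [← Real.rpow_natCast ((α / lam) ^ ((1:ℝ) / (p:ℝ))) p,
              ← Real.rpow_mul (le_of_lt hbase)]
            rw [one_div, inv_mul_cancel₀ (ne_of_gt hp0), Real.rpow_one]
      have h2 : lam / α < (|y 0| ^ p)⁻¹ := by
        have hyp : (0:ℝ) < |y 0| ^ p := by positivity
        have h3 : |y 0| ^ p * lam < α := by
          rw [lt_div_iff₀ hl] at hpowlt
          exact hpowlt
        rw [← one_div, div_lt_div_iff₀ hα0 hyp]
        nlinarith
      rw [hc_def, hu0]; linarith
  have hεu : y 0 ^ (-(p:ℤ)) < ε ^ (-(p:ℤ)) := by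
    rw [hu0, zpow_neg, zpow_natCast]
    have h1 : ε ^ p < |y 0| ^ p := pow_lt_pow_left₀ hy0 (le_of_lt hε) hpne
    exact inv_strictAnti₀ (by positivity) h1
  set R : ℝ := (ε ^ (-(p:ℤ)) - lam / α) / c with hR_def
  have hR1 : 1 < R := by
    rw [hR_def, lt_div_iff₀ hc, one_mul, hc_def]
    linarith
  have hT' : T = 1 / ((p:ℝ) * α) * Real.log R := by
    rw [hT, hR_def, hc_def, habs]
  have hTpos : 0 < T := by
    rw [hT']
    have : 0 < Real.log R := Real.log_pos hR1
    positivity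
  have hexpT : Real.exp ((p:ℝ) * α * T) = R := by
    rw [hT']
    have : (p:ℝ) * α * (1 / ((p:ℝ) * α) * Real.log R) = Real.log R := by
      field_simp
    rw [this, Real.exp_log (lt_trans one_pos hR1)]
  -- value at T
  have hyT : y T ^ (-(p:ℤ)) = ε ^ (-(p:ℤ)) := by
    have hcz : c ≠ 0 := ne_of_gt hc
    rw [hformula T (le_of_lt hTpos), hexpT, hR_def, ← mul_div_assoc,
      mul_div_cancel_left₀ _ hcz]
    ring
  have habsT : |y T| = ε := by
    have hyTne : y T ≠ 0 := hnz T (le_of_lt hTpos)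
    have h1 : (|y T| ^ p)⁻¹ = (ε ^ p)⁻¹ := by
      have h := hyT
      rw [← habs (y T), ← habs ε, abs_of_pos hε] at h
      simpa [zpow_neg, zpow_natCast] using h
    have h2 : |y T| ^ p = ε ^ p := inv_inj.mp h1
    exact (pow_left_strictMonoOn₀ hpne).injOn (Set.mem_setOf_eq.mpr (abs_nonneg (y T)))
      (Set.mem_setOf_eq.mpr (le_of_lt hε)) h2
  refine ⟨hTpos, habsT, ?_⟩
  intro t ht
  have hyt := hformula t ht.1
  have hytne : y t ≠ 0 := hnz t ht.1
  have hlt : y t ^ (-(p:ℤ)) < ε ^ (-(p:ℤ)) := by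
    rw [hyt, ← hyT, hformula T (le_of_lt hTpos)]
    have h5 : 0 < (p:ℝ) * α * (T - t) := mul_pos (mul_pos hp0 hα0) (sub_pos.2 ht.2)
    have h4 : Real.exp ((p:ℝ) * α * t) < Real.exp ((p:ℝ) * α * T) := by
      apply Real.exp_lt_exp.2
      nlinarith
    exact add_lt_add_right (mul_lt_mul_of_pos_left h4 hc) (lam / α)
  -- conclude ε < |y t|
  have h1 : (|y t| ^ p)⁻¹ < (ε ^ p)⁻¹ := by
    have h := hlt
    rw [← habs (y t), ← habs ε, abs_of_pos hε] at h
    simpa [zpow_neg, zpow_natCast] using h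
  have habstpos : 0 < |y t| := abs_pos.2 hytne
  have h2 : ε ^ p < |y t| ^ p := by
    have hεp : (0:ℝ) < ε ^ p := by positivity
    have hyp : (0:ℝ) < |y t| ^ p := by positivity
    rw [inv_lt_inv₀ hyp hεp] at h1
    exact h1
  by_contra hcon
  push_neg at hcon
  exact absurd h2 (not_lt.2 (pow_le_pow_left₀ (abs_nonneg _) hcon p))
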